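/- Let (X, ν) be a finite measure space, let φ : X → ℝ be a bounded measurable function, let h : X → ℝ be ν-integrable, and let μ and n be real numbers. Then lim_{m→+∞} [ ∫_X (m·μ·exp(2φ/m) − h/m) dν − (m + 2n)·μ·ν(X) ] = ∫_X 2μ·(φ − n) dν. (This is the measure-theoretic content of Proposition 4.24 of the paper: on a compact Riemannian manifold, with ν = e^{−φ}dvol and h = |∇φ|², the (m,μ)-energy functional satisfies lim_{m→∞} 𝒲_μ^m(g, e^{−φ}dvol, m) − (m+2n)μ·Vol_φ(M) = 𝒲_μ^∞(g, e^{−φ}dvol, ∞).) -/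

import Mathlib

open Filter Topology MeasureTheory

lemma aux_tendsto_exp (a : ℝ) :
    Tendsto (fun m : ℝ => m * (Real.exp (a / m) - 1)) atTop (𝓝 a) := by
  have hd : HasDerivAt (fun t : ℝ => Real.exp (a * t)) a 0 := by
    simpa using ((hasDerivAt_id (0:ℝ)).const_mul a).exp
  have hs := hasDerivAt_iff_tendsto_slope.mp hd
  have hinv : Tendsto (fun m : ℝ => m⁻¹) atTop (𝓝[≠] (0:ℝ)) := by
    apply tendsto_nhdsWithin_of_tendsto_nhds_of_eventually_within _ tendsto_inv_atTop_zero
    filter_upwards [eventually_gt_atTop (0:ℝ)] with m hm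
    simpa using (inv_ne_zero hm.ne')
  refine (hs.comp hinv).congr' ?_
  filter_upwards [eventually_gt_atTop (0:ℝ)] with m hm
  have hm0 : m ≠ 0 := hm.ne'
  simp only [Function.comp, slope, Real.exp_zero, mul_zero, sub_zero, vsub_eq_sub, smul_eq_mul]
  rw [div_eq_mul_inv a m, inv_inv]

/-- The measure-theoretic content of Proposition 4.24 of the paper: for a finite
measure `ν`, a bounded measurable `φ`, an integrable `h`, and reals `μ`, `n`,
`lim_{m → +∞} [∫ (m μ e^{2φ/m} − h/m) dν − (m + 2n) μ ν(X)] = ∫ 2μ(φ − n) dν`. -/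
theorem energy_functional_limit {X : Type*} [MeasurableSpace X]
    (ν : Measure X) [IsFiniteMeasure ν]
    (φ h : X → ℝ) (hφ : Measurable φ) (hφb : ∃ C : ℝ, ∀ x, |φ x| ≤ C)
    (hh : Integrable h ν) (μ n : ℝ) :
    Tendsto
      (fun m : ℝ =>
        (∫ x, (m * μ * Real.exp (2 * φ x / m) - h x / m) ∂ν)
          - (m + 2 * n) * μ * (ν Set.univ).toReal)
      atTop (𝓝 (∫ x, 2 * μ * (φ x - n) ∂ν)) := by
  obtain ⟨C₀, hC₀⟩ := hφb
  set C := max C₀ 0 with hCdef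
  have hC : ∀ x, |φ x| ≤ C := fun x => (hC₀ x).trans (le_max_left _ _)
  have hC0 : 0 ≤ C := le_max_right _ _
  have hφi : Integrable φ ν := by
    refine Integrable.mono' (integrable_const C) hφ.aestronglyMeasurable ?_
    filter_upwards with x using hC x
  -- dominated convergence for the main term
  have hmain : Tendsto (fun m : ℝ => ∫ x, m * μ * (Real.exp (2 * φ x / m) - 1) ∂ν)
      atTop (𝓝 (∫ x, 2 * μ * φ x ∂ν)) := by
    apply tendsto_integral_filter_of_dominated_convergence (fun _ => |μ| * (4 * C))
    · filter_upwards with m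
      exact ((((hφ.const_mul 2).div_const m).exp.sub measurable_const).const_mul
        (m*μ)).aestronglyMeasurable
    · filter_upwards [eventually_ge_atTop (max 1 (2*C))] with m hm
      filter_upwards with x
      have hm1 : (1:ℝ) ≤ m := le_trans (le_max_left _ _) hm
      have hm0 : 0 < m := lt_of_lt_of_le zero_lt_one hm1
      have ht : |2 * φ x / m| ≤ 1 := by
        rw [abs_div, abs_of_pos hm0, div_le_one hm0]
        calc |2 * φ x| = 2 * |φ x| := by rw [abs_mul, abs_of_nonneg (by norm_num : (0:ℝ) ≤ 2)]
          _ ≤ 2 * C := by linarith [hC x]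
          _ ≤ m := le_trans (le_max_right _ _) hm
      have h2 := Real.abs_exp_sub_one_le ht
      calc ‖m * μ * (Real.exp (2 * φ x / m) - 1)‖
          = m * |μ| * |Real.exp (2*φ x/m) - 1| := by
            rw [Real.norm_eq_abs, abs_mul, abs_mul, abs_of_pos hm0]
        _ ≤ m * |μ| * (2 * |2 * φ x / m|) := by gcongr
        _ = |μ| * (4 * |φ x|) := by
            rw [abs_div, abs_of_pos hm0, abs_mul,
              abs_of_nonneg (by norm_num : (0:ℝ) ≤ 2)]
            field_simp
            ring
        _ ≤ |μ| * (4 * C) := by gcongr; exact hC x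
    · exact integrable_const _
    · filter_upwards with x
      have := (aux_tendsto_exp (2 * φ x)).const_mul μ
      have heq : μ * (2 * φ x) = 2 * μ * φ x := by ring
      rw [heq] at this
      refine this.congr (fun m => ?_)
      ring
  -- the h/m term tends to 0
  have hmono : Tendsto (fun m : ℝ => (∫ x, h x ∂ν) / m) atTop (𝓝 0) :=
    tendsto_const_nhds.div_atTop tendsto_id
  have hlim : Tendsto (fun m : ℝ =>
      (∫ x, m * μ * (Real.exp (2 * φ x / m) - 1) ∂ν)
        - (∫ x, h x ∂ν) / m - 2 * n * μ * (ν Set.univ).toReal) atTop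
      (𝓝 ((∫ x, 2 * μ * φ x ∂ν) - 0 - 2 * n * μ * (ν Set.univ).toReal)) :=
    (hmain.sub hmono).sub tendsto_const_nhds
  have hval : (∫ x, 2 * μ * φ x ∂ν) - 0 - 2 * n * μ * (ν Set.univ).toReal
      = ∫ x, 2 * μ * (φ x - n) ∂ν := by
    rw [sub_zero]
    have : ∀ x, 2 * μ * (φ x - n) = 2 * μ * φ x - 2 * n * μ := fun x => by ring
    simp_rw [this]
    rw [integral_sub (hφi.const_mul _) (integrable_const _), integral_const,
      smul_eq_mul]
    simp only [Measure.real]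
    ring
  rw [← hval]
  refine hlim.congr' ?_
  filter_upwards [eventually_ge_atTop (1:ℝ)] with m hm1
  have hm0 : 0 < m := lt_of_lt_of_le zero_lt_one hm1
  -- integrability facts for this m
  have hexpI : Integrable (fun x => m * μ * Real.exp (2 * φ x / m)) ν := by
    refine Integrable.mono' (integrable_const (|m * μ| * Real.exp (2 * C)))
      (((((hφ.const_mul 2).div_const m).exp).const_mul (m*μ)).aestronglyMeasurable) ?_
    filter_upwards with x
    rw [Real.norm_eq_abs, abs_mul, Real.abs_exp]
    gcongr
    calc 2 * φ x / m ≤ |2 * φ x / m| := le_abs_self _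
        _ ≤ 2 * C := by
          rw [abs_div, abs_of_pos hm0, abs_mul,
            abs_of_nonneg (by norm_num : (0:ℝ) ≤ 2)]
          calc 2 * |φ x| / m ≤ 2 * C / m := by gcongr; exact hC x
            _ ≤ 2 * C / 1 := by gcongr
            _ = 2 * C := by ring
  have hhm : Integrable (fun x => h x / m) ν := hh.div_const m
  have hsub : Integrable (fun x => m * μ * (Real.exp (2 * φ x / m) - 1)) ν := by
    have : (fun x => m * μ * (Real.exp (2 * φ x / m) - 1))
        = fun x => m * μ * Real.exp (2 * φ x / m) - m * μ := by
      funext x; ring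
    rw [this]
    exact hexpI.sub (integrable_const _)
  rw [integral_sub hexpI hhm]
  have h1 : ∫ x, m * μ * (Real.exp (2 * φ x / m) - 1) ∂ν
      = (∫ x, m * μ * Real.exp (2 * φ x / m) ∂ν) - m * μ * (ν Set.univ).toReal := by
    have : (fun x => m * μ * (Real.exp (2 * φ x / m) - 1))
        = fun x => m * μ * Real.exp (2 * φ x / m) - m * μ := by
      funext x; ring
    rw [this, integral_sub hexpI (integrable_const _), integral_const, smul_eq_mul]
    simp only [Measure.real]
    ring
  have h3 : ∫ x, h x / m ∂ν = (∫ x, h x ∂ν) / m := by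
    rw [integral_div]
  rw [h1, h3]
  ring
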